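/- arXiv:2205.07344 — 3 statements merged into one kernel-verified Lean document; each statement's English description precedes it below -/
import Mathlib

section
/- Polyak–Łojasiewicz condition for the robust objective: under direct parameterization, for any probability distributions μ and ρ on S with μ_min := min_{s∈S} μ(s) > 0, every θ ∈ Δ(A)^S, and every choice of maximizing state s_θ, J_ρ(θ) − min_{θ'∈Δ(A)^S} J_ρ(θ') ≤ C_PL · max_{π̂∈Δ(A)^S} ⟨π_θ − π̂, ψ_μ(θ)⟩, where C_PL = 1/((1−γ)·μ_min), π_θ = θ, and ⟨·,·⟩ is the Euclidean inner product on ℝ^{S×A}. -/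
set_option autoImplicit false

open Finset

/-- The stochastic matrix of a policy `π` under the kernel `p`:
`P_π(s,s') = ∑ a, π(a|s)·p(s'|s,a)`. -/
noncomputable def pmat {S A : Type*} [Fintype A] (π : S → A → ℝ) (p : S → A → S → ℝ) :
    Matrix S S ℝ :=
  Matrix.of fun s s' => ∑ a, π s a * p s a s'

/-- The discounted visitation distribution
`d^π_s(s') = (1-γ+γR)·∑_{t≥0} (γ(1-R))^t·(P_π^t)(s,s')`. -/
noncomputable def dvisit {S A : Type*} [Fintype S] [Fintype A] [DecidableEq S]
    (γ R : ℝ) (π : S → A → ℝ) (p : S → A → S → ℝ) (s s' : S) : ℝ :=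
  (1 - γ + γ * R) * ∑' t : ℕ, (γ * (1 - R)) ^ t * ((pmat π p) ^ t) s s'

/-- Direct parameterization: `Θ = Δ(A)^S ⊆ ℝ^{S×A}`, `π_θ(a|s) = θ_{s,a}`. -/
def directSimplex (S A : Type*) [Fintype S] [Fintype A] : Set (EuclideanSpace ℝ (S × A)) :=
  {θ | ∀ s, (fun a => θ (s, a)) ∈ stdSimplex ℝ A}

/-- The robust policy subgradient `ψ_μ(θ)` under direct parameterization, with entries
`ψ_μ(θ)_{s,b} = (γR/((1-γ)(1-γ+γR)))·d^{π_θ}_{s_θ}(s)·Q^{π_θ}(s,b)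
  + (1/(1-γ+γR))·d^{π_θ}_μ(s)·Q^{π_θ}(s,b)`. -/
noncomputable def psiDirect {S A : Type*} [Fintype S] [Fintype A] [DecidableEq S]
    (γ R : ℝ) (p : S → A → S → ℝ) (μ : S → ℝ) (Q : S → A → ℝ)
    (θ : EuclideanSpace ℝ (S × A)) (sθ : S) : EuclideanSpace ℝ (S × A) :=
  (WithLp.equiv 2 _).symm fun sb : S × A =>
    γ * R / ((1 - γ) * (1 - γ + γ * R)) * dvisit γ R (fun s a => θ (s, a)) p sθ sb.1
        * Q sb.1 sb.2
      + 1 / (1 - γ + γ * R) * (∑ s₀, μ s₀ * dvisit γ R (fun s a => θ (s, a)) p s₀ sb.1)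
        * Q sb.1 sb.2

section aux
variable {S A : Type*} [Fintype S] [Fintype A] [DecidableEq S]

lemma pmat_pow_stoch (π : S → A → ℝ) (p : S → A → S → ℝ)
    (hπ : ∀ s, π s ∈ stdSimplex ℝ A) (hp : ∀ s a, p s a ∈ stdSimplex ℝ S) (t : ℕ) :
    (∀ s s', 0 ≤ ((pmat π p) ^ t) s s') ∧ (∀ s, ∑ s', ((pmat π p) ^ t) s s' = 1) := by
  induction t with
  | zero =>
    constructor
    · intro s s'
      simp [Matrix.one_apply]
      split <;> norm_num
    · intro s
      simp [Matrix.one_apply, Finset.sum_ite_eq]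
  | succ t ih =>
    have hP0 : ∀ s s', 0 ≤ (pmat π p) s s' := fun s s' =>
      Finset.sum_nonneg fun a _ => mul_nonneg ((hπ s).1 a) ((hp s a).1 s')
    have hP1 : ∀ s, ∑ s', (pmat π p) s s' = 1 := by
      intro s
      show ∑ s', ∑ a, π s a * p s a s' = 1
      rw [Finset.sum_comm]
      simp_rw [← Finset.mul_sum]
      calc ∑ a, π s a * ∑ s', p s a s' = ∑ a, π s a := by
            refine Finset.sum_congr rfl fun a _ => by rw [(hp s a).2, mul_one]
        _ = 1 := (hπ s).2
    constructor
    · intro s s'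
      rw [pow_succ, Matrix.mul_apply]
      exact Finset.sum_nonneg fun k _ => mul_nonneg (ih.1 s k) (hP0 k s')
    · intro s
      simp_rw [pow_succ, Matrix.mul_apply]
      rw [Finset.sum_comm]
      simp_rw [← Finset.mul_sum]
      calc ∑ k, ((pmat π p) ^ t) s k * ∑ s', pmat π p k s' = ∑ k, ((pmat π p) ^ t) s k := by
            refine Finset.sum_congr rfl fun k _ => by rw [hP1 k, mul_one]
        _ = 1 := ih.2 s

lemma dvisit_summable (γ R : ℝ) (hγ : γ ∈ Set.Ico (0:ℝ) 1) (hR : R ∈ Set.Icc (0:ℝ) 1)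
    (π : S → A → ℝ) (p : S → A → S → ℝ)
    (hπ : ∀ s, π s ∈ stdSimplex ℝ A) (hp : ∀ s a, p s a ∈ stdSimplex ℝ S) (s s' : S) :
    Summable (fun t : ℕ => (γ * (1 - R)) ^ t * ((pmat π p) ^ t) s s') := by
  have hβ0 : 0 ≤ γ * (1 - R) := mul_nonneg hγ.1 (by linarith [hR.2])
  have hβ1 : γ * (1 - R) < 1 := by
    nlinarith [hγ.1, hγ.2, hR.1, hR.2]
  refine Summable.of_nonneg_of_le
    (fun t => mul_nonneg (pow_nonneg hβ0 t) ((pmat_pow_stoch π p hπ hp t).1 s s'))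
    (fun t => ?_) (summable_geometric_of_lt_one hβ0 hβ1)
  have hle : ((pmat π p) ^ t) s s' ≤ 1 := by
    have := (pmat_pow_stoch π p hπ hp t).2 s
    have h0 := (pmat_pow_stoch π p hπ hp t).1 s
    calc ((pmat π p) ^ t) s s' ≤ ∑ k, ((pmat π p) ^ t) s k :=
          Finset.single_le_sum (fun k _ => h0 k) (mem_univ s')
      _ = 1 := this
  calc (γ * (1 - R)) ^ t * ((pmat π p) ^ t) s s' ≤ (γ * (1 - R)) ^ t * 1 := by
        exact mul_le_mul_of_nonneg_left hle (pow_nonneg hβ0 t)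
    _ = (γ * (1 - R)) ^ t := mul_one _

lemma dvisit_nonneg (γ R : ℝ) (hγ : γ ∈ Set.Ico (0:ℝ) 1) (hR : R ∈ Set.Icc (0:ℝ) 1)
    (π : S → A → ℝ) (p : S → A → S → ℝ)
    (hπ : ∀ s, π s ∈ stdSimplex ℝ A) (hp : ∀ s a, p s a ∈ stdSimplex ℝ S) (s s' : S) :
    0 ≤ dvisit γ R π p s s' := by
  have hβ0 : 0 ≤ γ * (1 - R) := mul_nonneg hγ.1 (by linarith [hR.2])
  refine mul_nonneg (by nlinarith [hγ.2, hγ.1, hR.1]) (tsum_nonneg fun t =>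
    mul_nonneg (pow_nonneg hβ0 t) ((pmat_pow_stoch π p hπ hp t).1 s s'))

lemma dvisit_self_ge (γ R : ℝ) (hγ : γ ∈ Set.Ico (0:ℝ) 1) (hR : R ∈ Set.Icc (0:ℝ) 1)
    (π : S → A → ℝ) (p : S → A → S → ℝ)
    (hπ : ∀ s, π s ∈ stdSimplex ℝ A) (hp : ∀ s a, p s a ∈ stdSimplex ℝ S) (s : S) :
    1 - γ + γ * R ≤ dvisit γ R π p s s := by
  have hβ0 : 0 ≤ γ * (1 - R) := mul_nonneg hγ.1 (by linarith [hR.2])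
  have hle : (1:ℝ) ≤ ∑' t : ℕ, (γ * (1 - R)) ^ t * ((pmat π p) ^ t) s s := by
    simpa [Matrix.one_apply] using Summable.le_tsum (dvisit_summable γ R hγ hR π p hπ hp s s) 0
      (fun t _ => mul_nonneg (pow_nonneg hβ0 t) ((pmat_pow_stoch π p hπ hp t).1 s s))
  have hc : 0 ≤ 1 - γ + γ * R := by nlinarith [hγ.2, hγ.1, hR.1]
  calc 1 - γ + γ * R = (1 - γ + γ * R) * 1 := (mul_one _).symm
    _ ≤ dvisit γ R π p s s := mul_le_mul_of_nonneg_left hle hc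

end aux

/-- **Polyak–Łojasiewicz condition for the robust objective (Theorem 2)**: under direct
parameterization, for distributions `μ, ρ` on `S` with `μ_min > 0`, every `θ ∈ Δ(A)^S`
and every maximizing state `s_θ`,
`J_ρ(θ) - min J_ρ ≤ C_PL · max_{π̂ ∈ Δ(A)^S} ⟨π_θ - π̂, ψ_μ(θ)⟩`, `C_PL = 1/((1-γ)μ_min)`. -/
theorem stmt_8 {S A : Type*} [Fintype S] [Fintype A] [Nonempty S] [Nonempty A] [DecidableEq S]
    (c : S → A → ℝ) (hc : ∀ s a, c s a ∈ Set.Icc (0 : ℝ) 1)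
    (γ : ℝ) (hγ : γ ∈ Set.Ico (0 : ℝ) 1)
    (R : ℝ) (hR : R ∈ Set.Icc (0 : ℝ) 1)
    (p : S → A → S → ℝ) (hp : ∀ s a, p s a ∈ stdSimplex ℝ S)
    (μ : S → ℝ) (hμ : μ ∈ stdSimplex ℝ S) (hμmin : ∀ s, 0 < μ s)
    (ρ : S → ℝ) (hρ : ρ ∈ stdSimplex ℝ S)
    (V : EuclideanSpace ℝ (S × A) → S → ℝ)
    (hV : ∀ θ ∈ directSimplex S A, ∀ s, V θ s = ∑ a, θ (s, a) * (c s a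
      + γ * (1 - R) * ∑ s', p s a s' * V θ s'
      + γ * R * univ.sup' univ_nonempty (V θ)))
    (Q : EuclideanSpace ℝ (S × A) → S → A → ℝ)
    (hQ : ∀ θ ∈ directSimplex S A, ∀ s a, Q θ s a = c s a
      + γ * (1 - R) * ∑ s', p s a s' * V θ s'
      + γ * R * univ.sup' univ_nonempty (V θ))
    (θ : EuclideanSpace ℝ (S × A)) (hθ : θ ∈ directSimplex S A)
    (sθ : S) (hsθ : ∀ s, V θ s ≤ V θ sθ) :
    (∑ s, ρ s * V θ s) - sInf ((fun θ' => ∑ s, ρ s * V θ' s) '' directSimplex S A) ≤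
      (1 / ((1 - γ) * univ.inf' univ_nonempty μ)) *
        sSup ((fun πhat : EuclideanSpace ℝ (S × A) =>
          (inner ℝ (θ - πhat) (psiDirect γ R p μ (Q θ) θ sθ) : ℝ)) '' directSimplex S A) := by
  classical
  obtain ⟨hγ0, hγ1⟩ := hγ
  obtain ⟨hR0, hR1⟩ := hR
  have h1γ : (0:ℝ) < 1 - γ := by linarith
  have hden : (0:ℝ) < 1 - γ + γ * R := by nlinarith
  have hγR : (0:ℝ) ≤ γ * R := mul_nonneg hγ0 hR0
  have hβ0 : (0:ℝ) ≤ γ * (1 - R) := mul_nonneg hγ0 (by linarith)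
  have hθsum : ∀ s, ∑ a, θ (s, a) = 1 := fun s => (hθ s).2
  have hθpos : ∀ s a, 0 ≤ θ (s, a) := fun s a => (hθ s).1 a
  -- basic facts about V and Q at θ
  have hVQ : ∀ s, V θ s = ∑ a, θ (s, a) * Q θ s a := by
    intro s
    rw [hV θ hθ s]
    exact Finset.sum_congr rfl fun a _ => by rw [hQ θ hθ s a]
  -- greedy action
  have hqile : ∀ s a, univ.inf' univ_nonempty (Q θ s) ≤ Q θ s a :=
    fun s a => Finset.inf'_le _ (mem_univ a)
  choose bm hbmem hbm using fun s => Finset.exists_mem_eq_inf' univ_nonempty (Q θ s)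
  -- g
  set g : S → ℝ := fun s => V θ s - univ.inf' univ_nonempty (Q θ s) with hgdef
  have hg0 : ∀ s, 0 ≤ g s := by
    intro s
    have : univ.inf' univ_nonempty (Q θ s) ≤ V θ s := by
      rw [hVQ s]
      calc univ.inf' univ_nonempty (Q θ s)
          = ∑ a, θ (s, a) * univ.inf' univ_nonempty (Q θ s) := by
            rw [← Finset.sum_mul, hθsum s, one_mul]
        _ ≤ ∑ a, θ (s, a) * Q θ s a :=
            Finset.sum_le_sum fun a _ =>
              mul_le_mul_of_nonneg_left (hqile s a) (hθpos s a)
    simp only [hgdef]; linarith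
  have hsupV : univ.sup' univ_nonempty (V θ) = V θ sθ :=
    le_antisymm (Finset.sup'_le _ _ fun s _ => hsθ s) (Finset.le_sup' _ (mem_univ sθ))
  -- the greedy policy
  set πh : EuclideanSpace ℝ (S × A) :=
    (WithLp.equiv 2 _).symm fun sb : S × A => if sb.2 = bm sb.1 then 1 else 0 with hπhdef
  have hπhapp : ∀ sb : S × A, πh sb = if sb.2 = bm sb.1 then 1 else 0 := fun sb => rfl
  have hπh : πh ∈ directSimplex S A := by
    intro s
    constructor
    · intro a
      show (0:ℝ) ≤ πh (s, a)
      rw [hπhapp]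
      dsimp only
      split <;> norm_num
    · show ∑ a, πh (s, a) = 1
      simp only [hπhapp]
      simp
  -- coefficient
  set d : S → S → ℝ := fun s₀ s => dvisit γ R (fun s a => θ (s, a)) p s₀ s with hddef
  have hd0 : ∀ s₀ s, 0 ≤ d s₀ s := fun s₀ s =>
    dvisit_nonneg γ R ⟨hγ0, hγ1⟩ ⟨hR0, hR1⟩ _ p hθ hp s₀ s
  have hdself : ∀ s, 1 - γ + γ * R ≤ d s s := fun s =>
    dvisit_self_ge γ R ⟨hγ0, hγ1⟩ ⟨hR0, hR1⟩ _ p hθ hp s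
  set C : S → ℝ := fun s => γ * R / ((1 - γ) * (1 - γ + γ * R)) * d sθ s
      + 1 / (1 - γ + γ * R) * (∑ s₀, μ s₀ * d s₀ s) with hCdef
  have hψapp : ∀ sb : S × A, psiDirect γ R p μ (Q θ) θ sθ sb = C sb.1 * Q θ sb.1 sb.2 := by
    intro sb
    show (γ * R / ((1 - γ) * (1 - γ + γ * R)) * dvisit γ R (fun s a => θ (s, a)) p sθ sb.1
        * Q θ sb.1 sb.2
      + 1 / (1 - γ + γ * R) * (∑ s₀, μ s₀ * dvisit γ R (fun s a => θ (s, a)) p s₀ sb.1)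
        * Q θ sb.1 sb.2) = _
    simp only [hCdef, hddef]; ring
  have hCμ : ∀ s, μ s ≤ C s := by
    intro s
    have h1 : 0 ≤ γ * R / ((1 - γ) * (1 - γ + γ * R)) * d sθ s :=
      mul_nonneg (div_nonneg hγR (le_of_lt (mul_pos h1γ hden))) (hd0 sθ s)
    have h2 : μ s * (1 - γ + γ * R) ≤ ∑ s₀, μ s₀ * d s₀ s := by
      calc μ s * (1 - γ + γ * R) ≤ μ s * d s s :=
            mul_le_mul_of_nonneg_left (hdself s) (le_of_lt (hμmin s))
        _ ≤ ∑ s₀, μ s₀ * d s₀ s :=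
            Finset.single_le_sum (fun s₀ _ => mul_nonneg (le_of_lt (hμmin s₀)) (hd0 s₀ s))
              (mem_univ s)
    have h3 : μ s ≤ 1 / (1 - γ + γ * R) * (∑ s₀, μ s₀ * d s₀ s) := by
      rw [one_div, inv_mul_eq_div, le_div_iff₀ hden]
      exact h2
    simp only [hCdef]; linarith
  -- inner product identity
  have hinner : (inner ℝ (θ - πh) (psiDirect γ R p μ (Q θ) θ sθ) : ℝ) = ∑ s, C s * g s := by
    rw [PiLp.inner_apply]
    simp only [RCLike.inner_apply, conj_trivial, hψapp, PiLp.sub_apply]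
    rw [Fintype.sum_prod_type]
    refine Finset.sum_congr rfl fun s _ => ?_
    have h2 : ∑ b, πh (s, b) * Q θ s b = univ.inf' univ_nonempty (Q θ s) := by
      simp only [hπhapp]
      rw [Finset.sum_congr rfl fun b _ => (by split <;> ring :
        (if b = bm s then (1:ℝ) else 0) * Q θ s b = if b = bm s then Q θ s b else 0)]
      rw [Finset.sum_ite_eq' univ (bm s) (Q θ s)]
      simp [hbm s]
    calc ∑ b, C s * Q θ s b * (θ (s, b) - πh (s, b))
        = C s * ((∑ b, θ (s, b) * Q θ s b) - ∑ b, πh (s, b) * Q θ s b) := by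
          rw [mul_sub, Finset.mul_sum, Finset.mul_sum, ← Finset.sum_sub_distrib]
          exact Finset.sum_congr rfl fun b _ => by ring
      _ = C s * g s := by rw [h2, ← hVQ s]
  -- BddAbove
  have hent : ∀ π' ∈ directSimplex S A, ∀ sb : S × A, 0 ≤ π' sb ∧ π' sb ≤ 1 := by
    intro π' hπ' sb
    refine ⟨(hπ' sb.1).1 sb.2, ?_⟩
    calc π' sb = π' (sb.1, sb.2) := by rw [Prod.mk.eta]
      _ ≤ ∑ b, π' (sb.1, b) :=
          Finset.single_le_sum (fun b _ => (hπ' sb.1).1 b) (mem_univ sb.2)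
      _ = 1 := (hπ' sb.1).2
  have hbdd : BddAbove ((fun πhat : EuclideanSpace ℝ (S × A) =>
      (inner ℝ (θ - πhat) (psiDirect γ R p μ (Q θ) θ sθ) : ℝ)) '' directSimplex S A) := by
    refine ⟨∑ sb : S × A, (|θ sb| + 1) * |psiDirect γ R p μ (Q θ) θ sθ sb|, ?_⟩
    rintro y ⟨π', hπ', rfl⟩
    dsimp only
    rw [PiLp.inner_apply]
    simp only [RCLike.inner_apply, conj_trivial, PiLp.sub_apply]
    refine Finset.sum_le_sum fun sb _ => ?_
    calc psiDirect γ R p μ (Q θ) θ sθ sb * (θ sb - π' sb)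
        ≤ |(θ sb - π' sb) * psiDirect γ R p μ (Q θ) θ sθ sb| := by
          rw [mul_comm]; exact le_abs_self _
      _ = |θ sb - π' sb| * |psiDirect γ R p μ (Q θ) θ sθ sb| := abs_mul _ _
      _ ≤ (|θ sb| + 1) * |psiDirect γ R p μ (Q θ) θ sθ sb| := by
          refine mul_le_mul_of_nonneg_right ?_ (abs_nonneg _)
          calc |θ sb - π' sb| ≤ |θ sb| + |π' sb| := abs_sub _ _
            _ ≤ |θ sb| + 1 := by
                have := hent π' hπ' sb
                rw [abs_of_nonneg this.1]
                linarith [this.2]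
  -- performance bound for each θ'
  have stepA : ∀ θ' ∈ directSimplex S A,
      (∑ s, ρ s * V θ s) - (∑ s, ρ s * V θ' s)
        ≤ (1 / (1 - γ)) * univ.sup' univ_nonempty g := by
    intro θ' hθ'
    have hθ'sum : ∀ s, ∑ a, θ' (s, a) = 1 := fun s => (hθ' s).2
    have hθ'pos : ∀ s a, 0 ≤ θ' (s, a) := fun s a => (hθ' s).1 a
    set M := univ.sup' univ_nonempty (fun s => V θ s - V θ' s) with hMdef
    have hfM : ∀ s, V θ s - V θ' s ≤ M := fun s =>
      Finset.le_sup' (fun s => V θ s - V θ' s) (mem_univ s)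
    obtain ⟨sm, _, hsm⟩ :=
      Finset.exists_mem_eq_sup' univ_nonempty (fun s => V θ s - V θ' s)
    have key : M ≤ univ.sup' univ_nonempty g + γ * M := by
      have expand : V θ sm - V θ' sm = (V θ sm - ∑ a, θ' (sm, a) * Q θ sm a)
          + (∑ a, θ' (sm, a) * (γ * (1 - R) * ∑ s', p sm a s' * (V θ s' - V θ' s')))
          + γ * R * ((univ.sup' univ_nonempty (V θ)) - univ.sup' univ_nonempty (V θ')) := by
        have hsum1 : ∑ a, θ' (sm, a) = 1 := hθ'sum sm
        rw [hV θ' hθ' sm]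
        simp only [hQ θ hθ]
        have hmerge : ∑ a, θ' (sm, a) * (c sm a
              + γ * (1 - R) * ∑ s', p sm a s' * V θ' s'
              + γ * R * univ.sup' univ_nonempty (V θ'))
            = ∑ a, (θ' (sm, a) * (c sm a
                + γ * (1 - R) * ∑ s', p sm a s' * V θ s'
                + γ * R * univ.sup' univ_nonempty (V θ))
              - θ' (sm, a) * (γ * (1 - R) * ∑ s', p sm a s' * (V θ s' - V θ' s'))
              - θ' (sm, a) * (γ * R * ((univ.sup' univ_nonempty (V θ))
                  - univ.sup' univ_nonempty (V θ')))) := by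
          refine Finset.sum_congr rfl fun a _ => ?_
          have hps : ∑ s', p sm a s' * (V θ s' - V θ' s')
              = (∑ s', p sm a s' * V θ s') - ∑ s', p sm a s' * V θ' s' := by
            rw [← Finset.sum_sub_distrib]
            exact Finset.sum_congr rfl fun s' _ => by ring
          rw [hps]; ring
        rw [hmerge, Finset.sum_sub_distrib, Finset.sum_sub_distrib, ← Finset.sum_mul, hsum1,
          one_mul]
        ring
      have t1 : V θ sm - ∑ a, θ' (sm, a) * Q θ sm a ≤ univ.sup' univ_nonempty g := by
        have : univ.inf' univ_nonempty (Q θ sm) ≤ ∑ a, θ' (sm, a) * Q θ sm a := by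
          calc univ.inf' univ_nonempty (Q θ sm)
              = ∑ a, θ' (sm, a) * univ.inf' univ_nonempty (Q θ sm) := by
                rw [← Finset.sum_mul, hθ'sum sm, one_mul]
            _ ≤ ∑ a, θ' (sm, a) * Q θ sm a :=
                Finset.sum_le_sum fun a _ =>
                  mul_le_mul_of_nonneg_left (hqile sm a) (hθ'pos sm a)
        have hgle : g sm ≤ univ.sup' univ_nonempty g := Finset.le_sup' g (mem_univ sm)
        simp only [hgdef] at hgle
        linarith
      have t2 : ∑ a, θ' (sm, a) * (γ * (1 - R) * ∑ s', p sm a s' * (V θ s' - V θ' s'))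
          ≤ γ * (1 - R) * M := by
        calc ∑ a, θ' (sm, a) * (γ * (1 - R) * ∑ s', p sm a s' * (V θ s' - V θ' s'))
            ≤ ∑ a, θ' (sm, a) * (γ * (1 - R) * M) := by
              refine Finset.sum_le_sum fun a _ => ?_
              refine mul_le_mul_of_nonneg_left ?_ (hθ'pos sm a)
              refine mul_le_mul_of_nonneg_left ?_ hβ0
              calc ∑ s', p sm a s' * (V θ s' - V θ' s')
                  ≤ ∑ s', p sm a s' * M :=
                    Finset.sum_le_sum fun s' _ =>
                      mul_le_mul_of_nonneg_left (hfM s') ((hp sm a).1 s')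
                _ = M := by rw [← Finset.sum_mul, (hp sm a).2, one_mul]
          _ = γ * (1 - R) * M := by rw [← Finset.sum_mul, hθ'sum sm, one_mul]
      have t3 : γ * R * ((univ.sup' univ_nonempty (V θ)) - univ.sup' univ_nonempty (V θ'))
          ≤ γ * R * M := by
        refine mul_le_mul_of_nonneg_left ?_ hγR
        have h1 : V θ' sθ ≤ univ.sup' univ_nonempty (V θ') :=
          Finset.le_sup' (V θ') (mem_univ sθ)
        have h2 : V θ sθ - V θ' sθ ≤ M := hfM sθ
        rw [hsupV]
        linarith
      have : V θ sm - V θ' sm ≤ univ.sup' univ_nonempty g + γ * (1 - R) * M + γ * R * M := by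
        rw [expand]; linarith
      rw [← hsm] at this
      nlinarith
    have hsum : (∑ s, ρ s * V θ s) - (∑ s, ρ s * V θ' s) ≤ M := by
      calc (∑ s, ρ s * V θ s) - (∑ s, ρ s * V θ' s)
          = ∑ s, ρ s * (V θ s - V θ' s) := by
            rw [← Finset.sum_sub_distrib]
            exact Finset.sum_congr rfl fun s _ => by ring
        _ ≤ ∑ s, ρ s * M :=
            Finset.sum_le_sum fun s _ => mul_le_mul_of_nonneg_left (hfM s) ((hρ).1 s)
        _ = M := by rw [← Finset.sum_mul, (hρ).2, one_mul]
    have hM : M ≤ (1 / (1 - γ)) * univ.sup' univ_nonempty g := by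
      rw [one_div, inv_mul_eq_div, le_div_iff₀ h1γ]
      nlinarith
    linarith
  -- assemble
  set G := univ.sup' univ_nonempty g with hGdef
  set μm := univ.inf' univ_nonempty μ with hμmdef
  have hμm0 : 0 < μm := by
    obtain ⟨s0, _, hs0⟩ := Finset.exists_mem_eq_inf' univ_nonempty μ
    rw [hμmdef, hs0]; exact hμmin s0
  set Ssup := sSup ((fun πhat : EuclideanSpace ℝ (S × A) =>
      (inner ℝ (θ - πhat) (psiDirect γ R p μ (Q θ) θ sθ) : ℝ)) '' directSimplex S A) with hSdef
  have hμG : μm * G ≤ Ssup := by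
    have h1 : ∑ s, μ s * g s ≤ ∑ s, C s * g s :=
      Finset.sum_le_sum fun s _ => mul_le_mul_of_nonneg_right (hCμ s) (hg0 s)
    have h2 : μm * G ≤ ∑ s, μ s * g s := by
      obtain ⟨sg, _, hsg⟩ := Finset.exists_mem_eq_sup' univ_nonempty g
      calc μm * G = μm * g sg := by rw [hGdef, hsg]
        _ ≤ μ sg * g sg :=
            mul_le_mul_of_nonneg_right (Finset.inf'_le μ (mem_univ sg)) (hg0 sg)
        _ ≤ ∑ s, μ s * g s :=
            Finset.single_le_sum (fun s _ => mul_nonneg (le_of_lt (hμmin s)) (hg0 s))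
              (mem_univ sg)
    have h3 : (inner ℝ (θ - πh) (psiDirect γ R p μ (Q θ) θ sθ) : ℝ) ≤ Ssup :=
      le_csSup hbdd ⟨πh, hπh, rfl⟩
    rw [hinner] at h3
    linarith
  have hfinal : (1 / (1 - γ)) * G ≤ 1 / ((1 - γ) * μm) * Ssup := by
    have hpos : (0:ℝ) < (1 - γ) * μm := mul_pos h1γ hμm0
    have heq : 1 / ((1 - γ) * μm) * Ssup - (1 / (1 - γ)) * G
        = (1 / ((1 - γ) * μm)) * (Ssup - μm * G) := by
      field_simp
    have hnn : 0 ≤ (1 / ((1 - γ) * μm)) * (Ssup - μm * G) :=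
      mul_nonneg (le_of_lt (one_div_pos.mpr hpos)) (by linarith)
    linarith [heq ▸ hnn]
  have hne : ((fun θ' => ∑ s, ρ s * V θ' s) '' directSimplex S A).Nonempty :=
    ⟨_, ⟨θ, hθ, rfl⟩⟩
  have hInf : (∑ s, ρ s * V θ s) - 1 / ((1 - γ) * μm) * Ssup
      ≤ sInf ((fun θ' => ∑ s, ρ s * V θ' s) '' directSimplex S A) := by
    refine le_csInf hne ?_
    rintro y ⟨θ', hθ', rfl⟩
    have := stepA θ' hθ'
    linarith
  linarith
end

section
/- Gradient of the smoothed robust value function: suppose Θ ⊆ ℝ^N is open and for all s, a the map θ ↦ π_θ(a|s) is differentiable on Θ. Then for every σ > 0 and every s ∈ S, the map θ ↦ V_σ^{π_θ}(s) is differentiable, and ∇_θ V_σ^{π_θ}(s) = B(s,θ) + (γR/(1−γ)) · (Σ_{s'∈S} e^{σ·V_σ^{π_θ}(s')}·B(s',θ)) / (Σ_{s'∈S} e^{σ·V_σ^{π_θ}(s')}). -/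
set_option autoImplicit false

open Finset

/-- Log-sum-exp: `LSE(σ, V) = (1/σ)·log (∑ s, exp (σ · V s))`. -/
noncomputable def lse {S : Type*} [Fintype S] (σ : ℝ) (V : S → ℝ) : ℝ :=
  (1 / σ) * Real.log (∑ s, Real.exp (σ * V s))

open Asymptotics Filter Topology RealInnerProductSpace

section AuxLemmas

/-- convexity helper -/
lemma abs_sum_mul_le_aux {ι : Type*} [Fintype ι] (w x : ι → ℝ) (hw : ∀ i, 0 ≤ w i) (C : ℝ)
    (hx : ∀ i, |x i| ≤ C) : |∑ i, w i * x i| ≤ (∑ i, w i) * C := by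
  calc |∑ i, w i * x i| ≤ ∑ i, |w i * x i| := Finset.abs_sum_le_sum_abs _ _
    _ ≤ ∑ i, w i * C := by
        refine Finset.sum_le_sum fun i _ => ?_
        rw [abs_mul, abs_of_nonneg (hw i)]
        exact mul_le_mul_of_nonneg_left (hx i) (hw i)
    _ = (∑ i, w i) * C := by rw [Finset.sum_mul]

lemma lse_le {S : Type*} [Fintype S] [Nonempty S] {σ : ℝ} (hσ : 0 < σ) (V V' : S → ℝ) :
    lse σ V ≤ lse σ V' + ‖V - V'‖ := by
  have h1 : ∀ s, Real.exp (σ * V s) ≤ Real.exp (σ * V' s) * Real.exp (σ * ‖V - V'‖) := by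
    intro s
    rw [← Real.exp_add]
    apply Real.exp_le_exp.2
    have : V s - V' s ≤ ‖V - V'‖ := by
      have := norm_le_pi_norm (V - V') s
      simp only [Pi.sub_apply, Real.norm_eq_abs] at this
      exact (abs_le.1 this).2
    nlinarith
  have hpos : (0:ℝ) < ∑ s, Real.exp (σ * V s) := Finset.sum_pos (fun s _ => Real.exp_pos _) univ_nonempty
  have hpos' : (0:ℝ) < ∑ s, Real.exp (σ * V' s) := Finset.sum_pos (fun s _ => Real.exp_pos _) univ_nonempty
  have h2 : Real.log (∑ s, Real.exp (σ * V s)) ≤ Real.log (∑ s, Real.exp (σ * V' s)) + σ * ‖V - V'‖ := by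
    calc Real.log (∑ s, Real.exp (σ * V s))
        ≤ Real.log ((∑ s, Real.exp (σ * V' s)) * Real.exp (σ * ‖V - V'‖)) := by
          apply Real.log_le_log hpos
          rw [Finset.sum_mul]
          exact Finset.sum_le_sum fun s _ => h1 s
      _ = Real.log (∑ s, Real.exp (σ * V' s)) + σ * ‖V - V'‖ := by
          rw [Real.log_mul (ne_of_gt hpos') (ne_of_gt (Real.exp_pos _)), Real.log_exp]
  unfold lse
  have := mul_le_mul_of_nonneg_left h2 (le_of_lt (one_div_pos.2 hσ))
  calc (1/σ) * Real.log (∑ s, Real.exp (σ * V s)) ≤ (1/σ) * (Real.log (∑ s, Real.exp (σ * V' s)) + σ * ‖V - V'‖) := this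
    _ = (1/σ) * Real.log (∑ s, Real.exp (σ * V' s)) + ‖V - V'‖ := by field_simp

lemma abs_lse_sub_le {S : Type*} [Fintype S] [Nonempty S] {σ : ℝ} (hσ : 0 < σ) (V V' : S → ℝ) :
    |lse σ V - lse σ V'| ≤ ‖V - V'‖ := by
  rw [abs_sub_le_iff]
  constructor
  · linarith [lse_le hσ V V']
  · have := lse_le hσ V' V
    rw [show V' - V = -(V - V') by abel, norm_neg] at this
    linarith

noncomputable def lseGrad {S : Type*} [Fintype S] (σ : ℝ) (V : S → ℝ) : (S → ℝ) →L[ℝ] ℝ :=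
  (∑ s, Real.exp (σ * V s))⁻¹ • ∑ s, Real.exp (σ * V s) •
    (ContinuousLinearMap.proj s : (S → ℝ) →L[ℝ] ℝ)

lemma lseGrad_apply {S : Type*} [Fintype S] (σ : ℝ) (V h : S → ℝ) :
    lseGrad σ V h = (∑ s, Real.exp (σ * V s))⁻¹ * ∑ s, Real.exp (σ * V s) * h s := by
  simp [lseGrad, ContinuousLinearMap.sum_apply, mul_comm]

lemma hasFDerivAt_lse {S : Type*} [Fintype S] [Nonempty S] {σ : ℝ} (hσ : 0 < σ) (V : S → ℝ) :
    HasFDerivAt (lse σ) (lseGrad σ V) V := by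
  have hpos : (0:ℝ) < ∑ s, Real.exp (σ * V s) :=
    Finset.sum_pos (fun s _ => Real.exp_pos _) univ_nonempty
  have hsum : HasFDerivAt (fun W : S → ℝ => ∑ s, Real.exp (σ * W s))
      (∑ s, (σ * Real.exp (σ * V s)) • (ContinuousLinearMap.proj s : (S → ℝ) →L[ℝ] ℝ)) V := by
    apply HasFDerivAt.fun_sum
    intro s _
    have h1 : HasFDerivAt (fun W : S → ℝ => σ * W s)
        (σ • (ContinuousLinearMap.proj s : (S → ℝ) →L[ℝ] ℝ)) V := by
      exact (ContinuousLinearMap.proj s : (S → ℝ) →L[ℝ] ℝ).hasFDerivAt.const_mul σ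
    have := h1.exp
    refine this.congr_fderiv ?_
    symm
    rw [smul_smul]
    ring_nf
  have hlog := (hsum.log (ne_of_gt hpos)).const_mul (1/σ)
  have : HasFDerivAt (lse σ) ((1/σ) • (∑ s, Real.exp (σ * V s))⁻¹ •
      (∑ s, (σ * Real.exp (σ * V s)) • (ContinuousLinearMap.proj s : (S → ℝ) →L[ℝ] ℝ))) V := hlog
  refine this.congr_fderiv ?_
  symm
  unfold lseGrad
  rw [smul_comm]
  congr 1
  rw [Finset.smul_sum]
  apply Finset.sum_congr rfl
  intro s _
  rw [smul_smul]
  congr 1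
  field_simp

section
variable {S : Type*} [Fintype S] [DecidableEq S] {P : Matrix S S ℝ}

lemma pow_entry_nonneg (h0 : ∀ s s', 0 ≤ P s s') (t : ℕ) : ∀ s s', 0 ≤ (P ^ t) s s' := by
  induction t with
  | zero => intro s s'; simp [Matrix.one_apply]; split <;> norm_num
  | succ n ih =>
    intro s s'
    rw [pow_succ, Matrix.mul_apply]
    exact Finset.sum_nonneg fun x _ => mul_nonneg (ih s x) (h0 x s')

lemma pow_row_sum (h1 : ∀ s, ∑ s', P s s' = 1) (t : ℕ) : ∀ s, ∑ s', (P ^ t) s s' = 1 := by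
  induction t with
  | zero => intro s; simp [Matrix.one_apply]
  | succ n ih =>
    intro s
    simp only [pow_succ, Matrix.mul_apply]
    rw [Finset.sum_comm]
    calc ∑ x, ∑ s', (P ^ n) s x * P x s' = ∑ x, (P ^ n) s x * ∑ s', P x s' := by
          simp [Finset.mul_sum]
      _ = 1 := by simp only [h1, mul_one]; exact ih s

lemma pow_entry_le_one (h0 : ∀ s s', 0 ≤ P s s') (h1 : ∀ s, ∑ s', P s s' = 1) (t : ℕ)
    (s s' : S) : (P ^ t) s s' ≤ 1 := by
  have := pow_row_sum h1 t s
  calc (P ^ t) s s' ≤ ∑ x, (P ^ t) s x :=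
        Finset.single_le_sum (fun x _ => pow_entry_nonneg h0 t s x) (Finset.mem_univ s')
    _ = 1 := this

lemma neumann_summable (h0 : ∀ s s', 0 ≤ P s s') (h1 : ∀ s, ∑ s', P s s' = 1)
    {β : ℝ} (hβ0 : 0 ≤ β) (hβ1 : β < 1) (s s' : S) :
    Summable (fun t : ℕ => β ^ t * (P ^ t) s s') := by
  apply Summable.of_nonneg_of_le
    (fun t => mul_nonneg (pow_nonneg hβ0 t) (pow_entry_nonneg h0 t s s'))
    (fun t => ?_) (summable_geometric_of_lt_one hβ0 hβ1)
  calc β ^ t * (P ^ t) s s' ≤ β ^ t * 1 :=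
        mul_le_mul_of_nonneg_left (pow_entry_le_one h0 h1 t s s') (pow_nonneg hβ0 t)
    _ = β ^ t := mul_one _

/-- Neumann-series solve: `b := K g` satisfies `b - β P b = g`. -/
lemma neumann_solve (h0 : ∀ s s', 0 ≤ P s s') (h1 : ∀ s, ∑ s', P s s' = 1)
    {β : ℝ} (hβ0 : 0 ≤ β) (hβ1 : β < 1) (g : S → ℝ) (s : S) :
    (∑ s₀, (∑' t : ℕ, β ^ t * (P ^ t) s s₀) * g s₀)
      - β * ∑ s', P s s' * (∑ s₀, (∑' t : ℕ, β ^ t * (P ^ t) s' s₀) * g s₀) = g s := by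
  set K : S → S → ℝ := fun x y => ∑' t : ℕ, β ^ t * (P ^ t) x y with hK
  have hkey : ∀ x y, K x y = (if x = y then (1:ℝ) else 0) + β * ∑ z, P x z * K z y := by
    intro x y
    have hsummable := neumann_summable h0 h1 hβ0 hβ1 x y
    rw [hK]
    simp only
    rw [hsummable.tsum_eq_zero_add]
    congr 1
    · simp [Matrix.one_apply]
    · have h2 : ∀ t : ℕ, β ^ (t+1) * (P ^ (t+1)) x y
          = ∑ z, β * (P x z * (β ^ t * (P ^ t) z y)) := by
        intro t
        have hPt : (P ^ (t+1)) x y = ∑ z, P x z * (P ^ t) z y := by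
          rw [pow_succ', Matrix.mul_apply]
        rw [hPt, Finset.mul_sum]
        apply Finset.sum_congr rfl
        intro z _
        ring
      calc (∑' t : ℕ, β ^ (t+1) * (P ^ (t+1)) x y)
          = ∑' t : ℕ, ∑ z, β * (P x z * (β ^ t * (P ^ t) z y)) := by
            exact tsum_congr h2
        _ = ∑ z, ∑' t : ℕ, β * (P x z * (β ^ t * (P ^ t) z y)) := by
            apply Summable.tsum_finsetSum
            intro z _
            exact (((neumann_summable h0 h1 hβ0 hβ1 z y).mul_left (P x z)).mul_left β)
        _ = β * ∑ z, P x z * K z y := by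
            rw [Finset.mul_sum]
            apply Finset.sum_congr rfl
            intro z _
            rw [tsum_mul_left, tsum_mul_left]
  have hswap : β * ∑ s', P s s' * (∑ s₀, K s' s₀ * g s₀)
      = ∑ s₀, (β * ∑ s', P s s' * K s' s₀) * g s₀ := by
    rw [Finset.mul_sum]
    simp_rw [Finset.mul_sum, Finset.sum_mul]
    rw [Finset.sum_comm]
    apply Finset.sum_congr rfl; intro s₀ _
    apply Finset.sum_congr rfl; intro s' _
    ring
  calc (∑ s₀, K s s₀ * g s₀) - β * ∑ s', P s s' * (∑ s₀, K s' s₀ * g s₀)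
      = ∑ s₀, (K s s₀ - β * ∑ s', P s s' * K s' s₀) * g s₀ := by
        rw [hswap, ← Finset.sum_sub_distrib]
        apply Finset.sum_congr rfl
        intro s₀ _
        ring
    _ = ∑ s₀, (if s = s₀ then (1:ℝ) else 0) * g s₀ := by
        apply Finset.sum_congr rfl
        intro s₀ _
        rw [hkey s s₀]
        ring
    _ = g s := by simp
end

end AuxLemmas

/-- **Gradient of the smoothed robust value function (Theorem 4, value form)**: for a
differentiable policy class on an open `Θ ⊆ ℝ^N`, every `σ > 0`, every `θ ∈ Θ` and `s ∈ S`,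
`θ ↦ V_σ^{π_θ}(s)` is differentiable with gradient
`B(s,θ) + (γR/(1-γ))·(∑_{s'} e^{σV_σ(s')}·B(s',θ))/(∑_{s'} e^{σV_σ(s')})`, where
`B(s,θ) = (1/(1-γ+γR))·∑_{s'} d^{π_θ}_s(s')·∑_a ∇π_θ(a|s')·Q_σ^{π_θ}(s',a)`. -/

theorem stmt_11 {S A : Type*} [Fintype S] [Fintype A] [Nonempty S] [Nonempty A] [DecidableEq S]
    {N : ℕ}
    (c : S → A → ℝ) (hc : ∀ s a, c s a ∈ Set.Icc (0 : ℝ) 1)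
    (γ : ℝ) (hγ : γ ∈ Set.Ico (0 : ℝ) 1)
    (R : ℝ) (hR : R ∈ Set.Icc (0 : ℝ) 1)
    (p : S → A → S → ℝ) (hp : ∀ s a, p s a ∈ stdSimplex ℝ S)
    (σ : ℝ) (hσ : 0 < σ)
    (Θ : Set (EuclideanSpace ℝ (Fin N))) (hΘo : IsOpen Θ)
    (π : EuclideanSpace ℝ (Fin N) → S → A → ℝ)
    (hπ : ∀ θ ∈ Θ, ∀ s, π θ s ∈ stdSimplex ℝ A)
    (D : EuclideanSpace ℝ (Fin N) → S → A → EuclideanSpace ℝ (Fin N))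
    (hD : ∀ θ ∈ Θ, ∀ s a, HasGradientAt (fun θ' => π θ' s a) (D θ s a) θ)
    (Vσ : EuclideanSpace ℝ (Fin N) → S → ℝ)
    (hVσ : ∀ θ ∈ Θ, ∀ s, Vσ θ s = ∑ a, π θ s a * (c s a
      + γ * (1 - R) * ∑ s', p s a s' * Vσ θ s'
      + γ * R * lse σ (Vσ θ)))
    (Qσ : EuclideanSpace ℝ (Fin N) → S → A → ℝ)
    (hQσ : ∀ θ ∈ Θ, ∀ s a, Qσ θ s a = c s a + γ * (1 - R) * ∑ s', p s a s' * Vσ θ s'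
      + γ * R * lse σ (Vσ θ))
    (B : S → EuclideanSpace ℝ (Fin N) → EuclideanSpace ℝ (Fin N))
    (hB : ∀ s θ, B s θ = (1 / (1 - γ + γ * R)) •
      ∑ s', ∑ a, (dvisit γ R (π θ) p s s' * Qσ θ s' a) • D θ s' a)
    (θ : EuclideanSpace ℝ (Fin N)) (hθ : θ ∈ Θ) (s : S) :
    HasGradientAt (fun θ' => Vσ θ' s)
      (B s θ + (γ * R / (1 - γ)) •
        ((∑ s', Real.exp (σ * Vσ θ s'))⁻¹ • ∑ s', Real.exp (σ * Vσ θ s') • B s' θ)) θ := by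
  classical
  obtain ⟨hγ0, hγ1⟩ := hγ
  obtain ⟨hR0, hR1⟩ := hR
  have hπθ := hπ θ hθ
  have hβ0 : 0 ≤ γ * (1 - R) := mul_nonneg hγ0 (by linarith)
  have hβ1 : γ * (1 - R) < 1 := lt_of_le_of_lt (by nlinarith) hγ1
  have hgR0 : 0 ≤ γ * R := mul_nonneg hγ0 hR0
  have h1γ : (0:ℝ) < 1 - γ := by linarith
  have h1β : (0:ℝ) < 1 - γ * (1 - R) := by nlinarith
  set Z : ℝ := ∑ s', Real.exp (σ * Vσ θ s') with hZdef
  have hZpos : 0 < Z := Finset.sum_pos (fun _ _ => Real.exp_pos _) univ_nonempty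
  set P : Matrix S S ℝ := pmat (π θ) p with hPdef
  have hP0 : ∀ x y, 0 ≤ P x y := fun x y =>
    Finset.sum_nonneg fun a _ => mul_nonneg ((hπ θ hθ x).1 a) ((hp x a).1 y)
  have hP1 : ∀ x, ∑ y, P x y = 1 := by
    intro x
    calc ∑ y, P x y = ∑ y, ∑ a, π θ x a * p x a y := rfl
      _ = ∑ a, ∑ y, π θ x a * p x a y := Finset.sum_comm
      _ = ∑ a, π θ x a := by
          apply Finset.sum_congr rfl; intro a _
          rw [← Finset.mul_sum, (hp x a).2, mul_one]
      _ = 1 := (hπ θ hθ x).2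
  set ell : (S → ℝ) → ℝ := fun V => Z⁻¹ * ∑ s', Real.exp (σ * Vσ θ s') * V s' with helldef
  have helladd : ∀ (V : S → ℝ) (k : ℝ), ell (fun x => V x + k) = ell V + k := by
    intro V k
    simp only [helldef]
    have h : (∑ s', Real.exp (σ * Vσ θ s') * (V s' + k))
        = (∑ s', Real.exp (σ * Vσ θ s') * V s') + (∑ s', Real.exp (σ * Vσ θ s')) * k := by
      rw [Finset.sum_mul, ← Finset.sum_add_distrib]
      apply Finset.sum_congr rfl; intros; ring
    rw [h, ← hZdef, mul_add]
    field_simp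
  have hellsub : ∀ V W : S → ℝ, ell (fun x => V x - W x) = ell V - ell W := by
    intro V W
    simp only [helldef]
    have h : (∑ s', Real.exp (σ * Vσ θ s') * (V s' - W s'))
        = (∑ s', Real.exp (σ * Vσ θ s') * V s') - (∑ s', Real.exp (σ * Vσ θ s') * W s') := by
      rw [← Finset.sum_sub_distrib]
      apply Finset.sum_congr rfl; intros; ring
    rw [h, mul_sub]
  have hellbound : ∀ V : S → ℝ, |ell V| ≤ ‖V‖ := by
    intro V
    simp only [helldef]
    rw [abs_mul, abs_of_nonneg (inv_nonneg.2 hZpos.le)]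
    have h := abs_sum_mul_le_aux (fun s' => Real.exp (σ * Vσ θ s')) V
      (fun s' => (Real.exp_pos _).le) ‖V‖
      (fun s' => by simpa [Real.norm_eq_abs] using norm_le_pi_norm V s')
    rw [← hZdef] at h
    calc Z⁻¹ * |∑ s', Real.exp (σ * Vσ θ s') * V s'| ≤ Z⁻¹ * (Z * ‖V‖) :=
          mul_le_mul_of_nonneg_left h (inv_nonneg.2 hZpos.le)
      _ = ‖V‖ := by field_simp
  have hconv : ∀ x a (V : S → ℝ), |∑ s', p x a s' * V s'| ≤ ‖V‖ := by
    intro x a V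
    have h := abs_sum_mul_le_aux (p x a) V (fun s' => (hp x a).1 s') ‖V‖
      (fun s' => by simpa [Real.norm_eq_abs] using norm_le_pi_norm V s')
    rwa [(hp x a).2, one_mul] at h
  have hPconv : ∀ x (V : S → ℝ), |∑ s', P x s' * V s'| ≤ ‖V‖ := by
    intro x V
    have h := abs_sum_mul_le_aux (P x) V (fun s' => hP0 x s') ‖V‖
      (fun s' => by simpa [Real.norm_eq_abs] using norm_le_pi_norm V s')
    rwa [hP1 x, one_mul] at h
  set q : EuclideanSpace ℝ (Fin N) → S → A → ℝ := fun θ' x a => c x a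
      + γ * (1 - R) * ∑ s', p x a s' * Vσ θ' s' + γ * R * lse σ (Vσ θ') with hqdef
  have hVB : ∀ θ' ∈ Θ, ∀ x, Vσ θ' x = ∑ a, π θ' x a * q θ' x a := fun θ' h x => hVσ θ' h x
  have hQq : ∀ x a, Qσ θ x a = q θ x a := fun x a => hQσ θ hθ x a
  set ΔV : EuclideanSpace ℝ (Fin N) → S → ℝ := fun θ' x => Vσ θ' x - Vσ θ x with hΔVdef
  have hΔVsub : ∀ θ', (ΔV θ' : S → ℝ) = Vσ θ' - Vσ θ := by
    intro θ'; funext x; simp [hΔVdef, Pi.sub_apply]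
  have hlsebnd : ∀ θ', |lse σ (Vσ θ') - lse σ (Vσ θ)| ≤ ‖ΔV θ'‖ := by
    intro θ'
    have := abs_lse_sub_le hσ (Vσ θ') (Vσ θ)
    rwa [← hΔVsub θ'] at this
  have hqdiff : ∀ θ' x a, q θ' x a - q θ x a
      = γ * (1 - R) * ∑ s', p x a s' * ΔV θ' s' + γ * R * (lse σ (Vσ θ') - lse σ (Vσ θ)) := by
    intro θ' x a
    have h : ∑ s', p x a s' * ΔV θ' s' =
        (∑ s', p x a s' * Vσ θ' s') - ∑ s', p x a s' * Vσ θ s' := by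
      rw [← Finset.sum_sub_distrib]
      apply Finset.sum_congr rfl; intro y _
      simp only [hΔVdef]; ring
    rw [h]
    simp only [hqdef]
    ring
  have hqbnd : ∀ θ' x a, |q θ' x a - q θ x a| ≤ γ * ‖ΔV θ'‖ := by
    intro θ' x a
    rw [hqdiff θ' x a]
    calc |γ * (1 - R) * ∑ s', p x a s' * ΔV θ' s' + γ * R * (lse σ (Vσ θ') - lse σ (Vσ θ))|
        ≤ |γ * (1 - R) * ∑ s', p x a s' * ΔV θ' s'| + |γ * R * (lse σ (Vσ θ') - lse σ (Vσ θ))| :=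
          abs_add_le _ _
      _ ≤ γ * (1 - R) * ‖(ΔV θ' : S → ℝ)‖ + γ * R * ‖(ΔV θ' : S → ℝ)‖ := by
          apply add_le_add
          · rw [abs_mul, abs_of_nonneg hβ0]
            exact mul_le_mul_of_nonneg_left (hconv x a (ΔV θ')) hβ0
          · rw [abs_mul, abs_of_nonneg hgR0]
            exact mul_le_mul_of_nonneg_left (hlsebnd θ') hgR0
      _ = γ * ‖(ΔV θ' : S → ℝ)‖ := by ring
  have hEvΘ : ∀ᶠ θ' in 𝓝 θ, θ' ∈ Θ := hΘo.eventually_mem hθ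
  have hdec1 : ∀ θ' ∈ Θ, ∀ x, ΔV θ' x
      = (∑ a, π θ' x a * (q θ' x a - q θ x a)) + ∑ a, (π θ' x a - π θ x a) * q θ x a := by
    intro θ' hθ' x
    simp only [hΔVdef]
    rw [hVB θ' hθ' x, hVB θ hθ x, ← Finset.sum_add_distrib, ← Finset.sum_sub_distrib]
    apply Finset.sum_congr rfl; intro a _; ring
  have hdec2 : ∀ θ' ∈ Θ, ∀ x, ΔV θ' x
      = (∑ a, (π θ' x a - π θ x a) * q θ' x a)
        + γ * (1 - R) * ∑ s', P x s' * ΔV θ' s'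
        + γ * R * (lse σ (Vσ θ') - lse σ (Vσ θ)) := by
    intro θ' hθ' x
    have base : ΔV θ' x = (∑ a, (π θ' x a - π θ x a) * q θ' x a)
        + ∑ a, π θ x a * (q θ' x a - q θ x a) := by
      simp only [hΔVdef]
      rw [hVB θ' hθ' x, hVB θ hθ x, ← Finset.sum_add_distrib, ← Finset.sum_sub_distrib]
      apply Finset.sum_congr rfl; intro a _; ring
    have hswap : ∑ a, π θ x a * ∑ s', p x a s' * ΔV θ' s' = ∑ s', P x s' * ΔV θ' s' := by
      calc ∑ a, π θ x a * ∑ s', p x a s' * ΔV θ' s'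
          = ∑ a, ∑ s', π θ x a * (p x a s' * ΔV θ' s') := by
            apply Finset.sum_congr rfl; intro a _; rw [Finset.mul_sum]
        _ = ∑ s', ∑ a, π θ x a * (p x a s' * ΔV θ' s') := Finset.sum_comm
        _ = ∑ s', P x s' * ΔV θ' s' := by
            apply Finset.sum_congr rfl; intro s' _
            have hPe : P x s' = ∑ a, π θ x a * p x a s' := rfl
            rw [hPe, Finset.sum_mul]
            apply Finset.sum_congr rfl; intro a _; ring
    have h3 : ∑ a, π θ x a * (q θ' x a - q θ x a)
        = γ * (1 - R) * ∑ s', P x s' * ΔV θ' s'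
          + γ * R * (lse σ (Vσ θ') - lse σ (Vσ θ)) := by
      calc ∑ a, π θ x a * (q θ' x a - q θ x a)
          = ∑ a, (γ * (1 - R) * (π θ x a * ∑ s', p x a s' * ΔV θ' s')
              + γ * R * (lse σ (Vσ θ') - lse σ (Vσ θ)) * π θ x a) := by
            apply Finset.sum_congr rfl; intro a _
            rw [hqdiff θ' x a]; ring
        _ = γ * (1 - R) * ∑ a, π θ x a * ∑ s', p x a s' * ΔV θ' s'
              + γ * R * (lse σ (Vσ θ') - lse σ (Vσ θ)) * ∑ a, π θ x a := by
            rw [Finset.sum_add_distrib, ← Finset.mul_sum, ← Finset.mul_sum]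
        _ = γ * (1 - R) * ∑ s', P x s' * ΔV θ' s'
              + γ * R * (lse σ (Vσ θ') - lse σ (Vσ θ)) := by
            rw [hswap, (hπθ x).2, mul_one]
    rw [base, h3]; ring
  have hbound : ∀ θ' ∈ Θ, ‖(ΔV θ' : S → ℝ)‖
      ≤ (1 - γ)⁻¹ * ‖(fun x => ∑ a, (π θ' x a - π θ x a) * q θ x a : S → ℝ)‖ := by
    intro θ' hθ'
    have hpoint : ∀ x, |ΔV θ' x| ≤ γ * ‖(ΔV θ' : S → ℝ)‖
        + ‖(fun x => ∑ a, (π θ' x a - π θ x a) * q θ x a : S → ℝ)‖ := by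
      intro x
      rw [hdec1 θ' hθ' x]
      have hA : |∑ a, π θ' x a * (q θ' x a - q θ x a)| ≤ γ * ‖(ΔV θ' : S → ℝ)‖ := by
        have h := abs_sum_mul_le_aux (π θ' x) (fun a => q θ' x a - q θ x a)
          (fun a => (hπ θ' hθ' x).1 a) (γ * ‖(ΔV θ' : S → ℝ)‖) (fun a => hqbnd θ' x a)
        rwa [(hπ θ' hθ' x).2, one_mul] at h
      have hB : |∑ a, (π θ' x a - π θ x a) * q θ x a|
          ≤ ‖(fun x => ∑ a, (π θ' x a - π θ x a) * q θ x a : S → ℝ)‖ := by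
        simpa [Real.norm_eq_abs] using
          norm_le_pi_norm (fun x => ∑ a, (π θ' x a - π θ x a) * q θ x a : S → ℝ) x
      calc |∑ a, π θ' x a * (q θ' x a - q θ x a) + ∑ a, (π θ' x a - π θ x a) * q θ x a|
          ≤ |∑ a, π θ' x a * (q θ' x a - q θ x a)| + |∑ a, (π θ' x a - π θ x a) * q θ x a| :=
            abs_add_le _ _
        _ ≤ _ := add_le_add hA hB
    have hnorm : ‖(ΔV θ' : S → ℝ)‖ ≤ γ * ‖(ΔV θ' : S → ℝ)‖
        + ‖(fun x => ∑ a, (π θ' x a - π θ x a) * q θ x a : S → ℝ)‖ := by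
      apply (pi_norm_le_iff_of_nonneg (add_nonneg (mul_nonneg hγ0 (norm_nonneg _))
        (norm_nonneg _))).2
      intro x
      simpa [Real.norm_eq_abs] using hpoint x
    have hstep : (1 - γ) * ‖(ΔV θ' : S → ℝ)‖
        ≤ ‖(fun x => ∑ a, (π θ' x a - π θ x a) * q θ x a : S → ℝ)‖ := by linarith
    calc ‖(ΔV θ' : S → ℝ)‖ = (1 - γ)⁻¹ * ((1 - γ) * ‖(ΔV θ' : S → ℝ)‖) := by field_simp
      _ ≤ (1 - γ)⁻¹ * ‖(fun x => ∑ a, (π θ' x a - π θ x a) * q θ x a : S → ℝ)‖ :=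
          mul_le_mul_of_nonneg_left hstep (inv_nonneg.2 h1γ.le)
  have hpiO : ∀ x a, (fun θ' => π θ' x a - π θ x a) =O[𝓝 θ] (fun θ' => θ' - θ) :=
    fun x a => ((hD θ hθ x a).hasFDerivAt).isBigO_sub
  have hpio : ∀ x a, (fun θ' => π θ' x a - π θ x a - ⟪D θ x a, θ' - θ⟫)
      =o[𝓝 θ] (fun θ' => θ' - θ) := by
    intro x a
    have h := ((hD θ hθ x a).hasFDerivAt).isLittleO
    apply h.congr_left
    intro θ'
    simp [InnerProductSpace.toDual_apply_apply]
  have hErrO : (fun θ' => (fun x => ∑ a, (π θ' x a - π θ x a) * q θ x a : S → ℝ))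
      =O[𝓝 θ] (fun θ' => θ' - θ) := by
    rw [isBigO_pi]
    intro x
    apply IsBigO.fun_sum
    intro a _
    exact ((hpiO x a).const_mul_left (q θ x a)).congr_left fun θ' => mul_comm _ _
  have hΔVO : (fun θ' => (ΔV θ' : S → ℝ)) =O[𝓝 θ] (fun θ' => θ' - θ) := by
    have h1 : (fun θ' => (ΔV θ' : S → ℝ)) =O[𝓝 θ]
        (fun θ' => (fun x => ∑ a, (π θ' x a - π θ x a) * q θ x a : S → ℝ)) := by
      apply IsBigO.of_bound (1 - γ)⁻¹
      filter_upwards [hEvΘ] with θ' hθ'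
      simpa using hbound θ' hθ'
    exact h1.trans hErrO
  have hΔVtend : Tendsto (fun θ' => (ΔV θ' : S → ℝ)) (𝓝 θ) (𝓝 0) := by
    have : Tendsto (fun θ' : EuclideanSpace ℝ (Fin N) => θ' - θ) (𝓝 θ) (𝓝 0) :=
      tendsto_sub_nhds_zero_iff.2 tendsto_id
    exact hΔVO.trans_tendsto this
  have htendV : Tendsto (fun θ' => Vσ θ') (𝓝 θ) (𝓝 (Vσ θ)) := by
    apply tendsto_sub_nhds_zero_iff.1
    apply hΔVtend.congr
    intro θ'; rw [hΔVsub θ']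
  set gr : S → EuclideanSpace ℝ (Fin N) := fun x => B x θ
      + (γ * R / (1 - γ)) • (Z⁻¹ • ∑ s', Real.exp (σ * Vσ θ s') • B s' θ) with hgrdef
  have halg : ∀ (u : EuclideanSpace ℝ (Fin N)) x,
      ⟪gr x, u⟫ - γ * (1 - R) * ∑ s', P x s' * ⟪gr s', u⟫
        - γ * R * ell (fun s' => ⟪gr s', u⟫)
      = ∑ a, ⟪D θ x a, u⟫ * q θ x a := by
    intro u x
    have hb : ∀ y, ⟪B y θ, u⟫ = ∑ s₀, (∑' t : ℕ, (γ * (1 - R)) ^ t * (P ^ t) y s₀)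
        * (∑ a, ⟪D θ s₀ a, u⟫ * q θ s₀ a) := by
      intro y
      rw [hB y θ]
      rw [real_inner_smul_left, sum_inner]
      have h1β' : (1 : ℝ) - γ + γ * R ≠ 0 := by nlinarith
      rw [Finset.mul_sum]
      apply Finset.sum_congr rfl
      intro s₀ _
      rw [sum_inner]
      have hdv : dvisit γ R (π θ) p y s₀
          = (1 - γ + γ * R) * ∑' t : ℕ, (γ * (1 - R)) ^ t * (P ^ t) y s₀ := by
        simp only [dvisit, ← hPdef]
      calc (1 / (1 - γ + γ * R)) * ∑ a, ⟪(dvisit γ R (π θ) p y s₀ * Qσ θ s₀ a) • D θ s₀ a, u⟫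
          = (1 / (1 - γ + γ * R)) * ∑ a, (dvisit γ R (π θ) p y s₀ * Qσ θ s₀ a) * ⟪D θ s₀ a, u⟫ := by
            congr 1
            apply Finset.sum_congr rfl; intro a _
            rw [real_inner_smul_left]
        _ = (∑' t : ℕ, (γ * (1 - R)) ^ t * (P ^ t) y s₀) * ∑ a, ⟪D θ s₀ a, u⟫ * q θ s₀ a := by
            rw [Finset.mul_sum, Finset.mul_sum]
            apply Finset.sum_congr rfl; intro a _
            rw [hdv, hQq s₀ a]
            field_simp
    have hbsolve : ∀ y, ⟪B y θ, u⟫ - γ * (1 - R) * ∑ s', P y s' * ⟪B s' θ, u⟫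
        = ∑ a, ⟪D θ y a, u⟫ * q θ y a := by
      intro y
      have h := neumann_solve hP0 hP1 hβ0 hβ1
        (fun s₀ => ∑ a, ⟪D θ s₀ a, u⟫ * q θ s₀ a) y
      rw [hb y]
      have h2 : ∑ s', P y s' * ⟪B s' θ, u⟫
          = ∑ s', P y s' * ∑ s₀, (∑' t : ℕ, (γ * (1 - R)) ^ t * (P ^ t) s' s₀)
            * (∑ a, ⟪D θ s₀ a, u⟫ * q θ s₀ a) := by
        apply Finset.sum_congr rfl; intro s' _
        rw [hb s']
      rw [h2]
      exact h
    have hginner : ∀ y, ⟪gr y, u⟫ = ⟪B y θ, u⟫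
        + (γ * R / (1 - γ)) * ell (fun s' => ⟪B s' θ, u⟫) := by
      intro y
      simp only [hgrdef]
      rw [inner_add_left, real_inner_smul_left, real_inner_smul_left, sum_inner]
      simp only [helldef]
      congr 2
      congr 1
      apply Finset.sum_congr rfl; intro s' _
      rw [real_inner_smul_left]
    set b : S → ℝ := fun y => ⟪B y θ, u⟫ with hbdef
    have hc0 : ∀ y, ⟪gr y, u⟫ = b y + (γ * R / (1 - γ)) * ell b := fun y => hginner y
    have hsum1 : ∑ s', P x s' * ⟪gr s', u⟫
        = (∑ s', P x s' * b s') + (γ * R / (1 - γ)) * ell b := by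
      calc ∑ s', P x s' * ⟪gr s', u⟫
          = ∑ s', (P x s' * b s' + P x s' * ((γ * R / (1 - γ)) * ell b)) := by
            apply Finset.sum_congr rfl; intro s' _; rw [hc0 s']; ring
        _ = (∑ s', P x s' * b s') + (∑ s', P x s') * ((γ * R / (1 - γ)) * ell b) := by
            rw [Finset.sum_add_distrib, Finset.sum_mul]
        _ = (∑ s', P x s' * b s') + (γ * R / (1 - γ)) * ell b := by
            rw [hP1 x, one_mul]
    have hsum2 : ell (fun s' => ⟪gr s', u⟫) = ell b + (γ * R / (1 - γ)) * ell b := by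
      have : (fun s' => ⟪gr s', u⟫) = fun s' => b s' + (γ * R / (1 - γ)) * ell b := by
        funext s'; exact hc0 s'
      rw [this, helladd]
    rw [hc0 x, hsum1, hsum2, ← hbsolve x]
    have hellb : (γ * R / (1 - γ)) * ell b * (1 - γ) = γ * R * ell b := by
      field_simp
    linear_combination hellb
  have hF1 : ∀ x, (fun θ' => ∑ a, (π θ' x a - π θ x a - ⟪D θ x a, θ' - θ⟫) * q θ x a)
      =o[𝓝 θ] (fun θ' => θ' - θ) := by
    intro x
    apply IsLittleO.fun_sum
    intro a _
    exact ((hpio x a).const_mul_left (q θ x a)).congr_left fun θ' => mul_comm _ _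
  have hF2 : ∀ x, (fun θ' => ∑ a, (π θ' x a - π θ x a) * (q θ' x a - q θ x a))
      =o[𝓝 θ] (fun θ' => θ' - θ) := by
    intro x
    apply IsLittleO.fun_sum
    intro a _
    have h1 : (fun θ' => π θ' x a - π θ x a) =O[𝓝 θ]
        (fun θ' : EuclideanSpace ℝ (Fin N) => ‖θ' - θ‖) := isBigO_norm_right.2 (hpiO x a)
    have h2 : (fun θ' => q θ' x a - q θ x a) =o[𝓝 θ] (fun _ => (1:ℝ)) := by
      rw [isLittleO_one_iff]
      have hbq : ∀ θ', ‖q θ' x a - q θ x a‖ ≤ γ * ‖(ΔV θ' : S → ℝ)‖ := fun θ' => by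
        simpa [Real.norm_eq_abs] using hqbnd θ' x a
      have hgt : Tendsto (fun θ' => γ * ‖(ΔV θ' : S → ℝ)‖) (𝓝 θ) (𝓝 0) := by
        have h3 : Tendsto (fun θ' => ‖(ΔV θ' : S → ℝ)‖) (𝓝 θ) (𝓝 0) := by
          simpa using hΔVtend.norm
        simpa using h3.const_mul γ
      exact squeeze_zero_norm hbq hgt
    have h3 := h1.mul_isLittleO h2
    rw [← isLittleO_norm_right]
    apply h3.congr_right
    intro θ'
    rw [mul_one]
  have hF3 : (fun θ' => γ * R * ((lse σ (Vσ θ') - lse σ (Vσ θ)) - ell (ΔV θ')))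
      =o[𝓝 θ] (fun θ' => θ' - θ) := by
    have hlse := (hasFDerivAt_lse hσ (Vσ θ)).isLittleO
    have hcomp := hlse.comp_tendsto htendV
    have hO : ((fun V' : S → ℝ => V' - Vσ θ) ∘ fun θ' => Vσ θ') =O[𝓝 θ]
        (fun θ' => θ' - θ) := by
      apply hΔVO.congr_left
      intro θ'
      rw [hΔVsub θ']
      rfl
    have ho := hcomp.trans_isBigO hO
    apply (ho.const_mul_left (γ * R)).congr_left
    intro θ'
    show γ * R * (lse σ (Vσ θ') - lse σ (Vσ θ) - lseGrad σ (Vσ θ) (Vσ θ' - Vσ θ))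
        = γ * R * ((lse σ (Vσ θ') - lse σ (Vσ θ)) - ell (ΔV θ'))
    have hlg : lseGrad σ (Vσ θ) (Vσ θ' - Vσ θ) = ell (ΔV θ') := by
      rw [lseGrad_apply, ← hZdef]
      simp only [helldef, hΔVdef, Pi.sub_apply]
    rw [hlg]
  set err : EuclideanSpace ℝ (Fin N) → S → ℝ := fun θ' x => ΔV θ' x - ⟪gr x, θ' - θ⟫
    with herrdef
  have hM : ∀ θ' ∈ Θ, ∀ x,
      err θ' x - γ * (1 - R) * ∑ s', P x s' * err θ' s' - γ * R * ell (err θ')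
      = (∑ a, (π θ' x a - π θ x a - ⟪D θ x a, θ' - θ⟫) * q θ x a)
        + (∑ a, (π θ' x a - π θ x a) * (q θ' x a - q θ x a))
        + γ * R * ((lse σ (Vσ θ') - lse σ (Vσ θ)) - ell (ΔV θ')) := by
    intro θ' hθ' x
    have e1 : ∀ y, err θ' y = ΔV θ' y - ⟪gr y, θ' - θ⟫ := fun y => rfl
    have hsplit1 : ∑ s', P x s' * err θ' s'
        = (∑ s', P x s' * ΔV θ' s') - ∑ s', P x s' * ⟪gr s', θ' - θ⟫ := by
      rw [← Finset.sum_sub_distrib]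
      apply Finset.sum_congr rfl; intro y _
      rw [e1 y]; ring
    have hsplit2 : ell (err θ') = ell (ΔV θ') - ell (fun s' => ⟪gr s', θ' - θ⟫) := by
      rw [← hellsub]
    have hKey := hdec2 θ' hθ' x
    have hAlg := halg (θ' - θ) x
    have hcomb : (∑ a, (π θ' x a - π θ x a) * q θ' x a)
        - ∑ a, ⟪D θ x a, θ' - θ⟫ * q θ x a
        = (∑ a, (π θ' x a - π θ x a - ⟪D θ x a, θ' - θ⟫) * q θ x a)
          + ∑ a, (π θ' x a - π θ x a) * (q θ' x a - q θ x a) := by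
      rw [← Finset.sum_sub_distrib, ← Finset.sum_add_distrib]
      apply Finset.sum_congr rfl; intro a _; ring
    rw [e1 x, hsplit1, hsplit2, hKey]
    linear_combination hcomb - hAlg
  have hMerr : (fun θ' => (fun x => err θ' x - γ * (1 - R) * ∑ s', P x s' * err θ' s'
      - γ * R * ell (err θ') : S → ℝ)) =o[𝓝 θ] (fun θ' => θ' - θ) := by
    rw [isLittleO_pi]
    intro x
    have hsum := ((hF1 x).add (hF2 x)).add hF3
    apply hsum.congr' ?_ EventuallyEq.rfl
    filter_upwards [hEvΘ] with θ' hθ'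
    exact (hM θ' hθ' x).symm
  have hcoer : ∀ V : S → ℝ, (1 - γ) * ‖V‖
      ≤ ‖(fun x => V x - γ * (1 - R) * ∑ s', P x s' * V s' - γ * R * ell V : S → ℝ)‖ := by
    intro V
    obtain ⟨x0, hx0⟩ := Finite.exists_max (fun x => |V x|)
    have hVn : ‖V‖ ≤ |V x0| := by
      apply (pi_norm_le_iff_of_nonneg (abs_nonneg _)).2
      intro x
      simpa [Real.norm_eq_abs] using hx0 x
    have h1 : |γ * (1 - R) * ∑ s', P x0 s' * V s' + γ * R * ell V| ≤ γ * ‖V‖ := by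
      calc |γ * (1 - R) * ∑ s', P x0 s' * V s' + γ * R * ell V|
          ≤ |γ * (1 - R) * ∑ s', P x0 s' * V s'| + |γ * R * ell V| := abs_add_le _ _
        _ ≤ γ * (1 - R) * ‖V‖ + γ * R * ‖V‖ := by
            apply add_le_add
            · rw [abs_mul, abs_of_nonneg hβ0]
              exact mul_le_mul_of_nonneg_left (hPconv x0 V) hβ0
            · rw [abs_mul, abs_of_nonneg hgR0]
              exact mul_le_mul_of_nonneg_left (hellbound V) hgR0
        _ = γ * ‖V‖ := by ring
    have habs := abs_sub_abs_le_abs_sub (V x0)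
      (γ * (1 - R) * ∑ s', P x0 s' * V s' + γ * R * ell V)
    have h2 : (1 - γ) * ‖V‖
        ≤ |V x0 - (γ * (1 - R) * ∑ s', P x0 s' * V s' + γ * R * ell V)| := by
      nlinarith [norm_nonneg V]
    have h3 : V x0 - (γ * (1 - R) * ∑ s', P x0 s' * V s' + γ * R * ell V)
        = V x0 - γ * (1 - R) * ∑ s', P x0 s' * V s' - γ * R * ell V := by ring
    rw [h3] at h2
    refine h2.trans ?_
    simpa [Real.norm_eq_abs] using
      norm_le_pi_norm (fun x => V x - γ * (1 - R) * ∑ s', P x s' * V s' - γ * R * ell V : S → ℝ) x0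
  have herro : (fun θ' => (err θ' : S → ℝ)) =o[𝓝 θ] (fun θ' => θ' - θ) := by
    refine IsBigO.trans_isLittleO ?_ hMerr
    apply IsBigO.of_bound (1 - γ)⁻¹
    filter_upwards with θ'
    have h := hcoer (err θ')
    have h2 : ‖(err θ' : S → ℝ)‖ ≤ (1 - γ)⁻¹
        * ‖(fun x => err θ' x - γ * (1 - R) * ∑ s', P x s' * err θ' s'
            - γ * R * ell (err θ') : S → ℝ)‖ := by
      rw [← inv_mul_cancel_left₀ (ne_of_gt h1γ) ‖(err θ' : S → ℝ)‖]
      exact mul_le_mul_of_nonneg_left h (inv_nonneg.2 h1γ.le)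
    simpa using h2
  rw [hasGradientAt_iff_hasFDerivAt]
  apply HasFDerivAt.of_isLittleO
  have hfin := (isLittleO_pi.1 herro) s
  apply hfin.congr_left
  intro θ'
  simp only [herrdef, hΔVdef, InnerProductSpace.toDual_apply_apply, hgrdef]
end

section
/- Smoothed value-difference inequality: for any two stationary policies π₁ and π₂, every σ > 0, and every s ∈ S, V_σ^{π₁}(s) − V_σ^{π₂}(s) ≤ (1/(1−γ+γR))·Σ_{s'∈S} d^{π₂}_s(s')·Σ_{a∈A} (π₁(a|s') − π₂(a|s'))·Q_σ^{π₁}(s',a) + (γR/(1−γ+γR))·(LSE(σ, V_σ^{π₁}) − LSE(σ, V_σ^{π₂})). -/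
set_option autoImplicit false

open Finset

/-- **Smoothed value-difference inequality**: for stationary policies `π₁, π₂`, `σ > 0` and
any state `s`,
`V_σ^{π₁}(s) - V_σ^{π₂}(s) ≤ (1/(1-γ+γR))·∑_{s'} d^{π₂}_s(s')·∑_a (π₁(a|s')-π₂(a|s'))·Q_σ^{π₁}(s',a)
  + (γR/(1-γ+γR))·(LSE(σ,V_σ^{π₁}) - LSE(σ,V_σ^{π₂}))`. -/
theorem stmt_16 {S A : Type*} [Fintype S] [Fintype A] [Nonempty S] [Nonempty A] [DecidableEq S]
    (c : S → A → ℝ) (hc : ∀ s a, c s a ∈ Set.Icc (0 : ℝ) 1)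
    (γ : ℝ) (hγ : γ ∈ Set.Ico (0 : ℝ) 1)
    (R : ℝ) (hR : R ∈ Set.Icc (0 : ℝ) 1)
    (p : S → A → S → ℝ) (hp : ∀ s a, p s a ∈ stdSimplex ℝ S)
    (σ : ℝ) (hσ : 0 < σ)
    (π₁ π₂ : S → A → ℝ) (hπ₁ : ∀ s, π₁ s ∈ stdSimplex ℝ A) (hπ₂ : ∀ s, π₂ s ∈ stdSimplex ℝ A)
    (V₁ V₂ : S → ℝ)
    (hV₁ : ∀ s, V₁ s = ∑ a, π₁ s a * (c s a + γ * (1 - R) * ∑ s', p s a s' * V₁ s'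
      + γ * R * lse σ V₁))
    (hV₂ : ∀ s, V₂ s = ∑ a, π₂ s a * (c s a + γ * (1 - R) * ∑ s', p s a s' * V₂ s'
      + γ * R * lse σ V₂))
    (Q₁ : S → A → ℝ)
    (hQ₁ : ∀ s a, Q₁ s a = c s a + γ * (1 - R) * ∑ s', p s a s' * V₁ s' + γ * R * lse σ V₁)
    (s : S) :
    V₁ s - V₂ s ≤ (1 / (1 - γ + γ * R)) *
        ∑ s', dvisit γ R π₂ p s s' * ∑ a, (π₁ s' a - π₂ s' a) * Q₁ s' a
      + (γ * R / (1 - γ + γ * R)) * (lse σ V₁ - lse σ V₂) := by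
  obtain ⟨hγ0, hγ1⟩ := hγ
  obtain ⟨hR0, hR1⟩ := hR
  have hβ0 : 0 ≤ γ * (1 - R) := mul_nonneg hγ0 (by linarith)
  have hβ1 : γ * (1 - R) < 1 := lt_of_le_of_lt (by nlinarith) hγ1
  set β : ℝ := γ * (1 - R) with hβdef
  have h1β : (0:ℝ) < 1 - β := by linarith
  set M : Matrix S S ℝ := pmat π₂ p with hMdef
  set W : S → ℝ := fun s0 => V₁ s0 - V₂ s0 with hWdef
  set Δ : S → ℝ := fun s0 => ∑ a, (π₁ s0 a - π₂ s0 a) * Q₁ s0 a with hΔdef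
  set k : ℝ := γ * R * (lse σ V₁ - lse σ V₂) with hkdef
  set g : S → ℝ := fun s0 => Δ s0 + k with hgdef
  have hMapp : ∀ s0 s1, M s0 s1 = ∑ a, π₂ s0 a * p s0 a s1 := fun s0 s1 => rfl
  have hMnn : ∀ s0 s1, 0 ≤ M s0 s1 := fun s0 s1 =>
    Finset.sum_nonneg fun a _ => mul_nonneg ((hπ₂ s0).1 a) ((hp s0 a).1 s1)
  have hMrow : ∀ s0, ∑ s1, M s0 s1 = 1 := by
    intro s0
    calc ∑ s1, M s0 s1 = ∑ a, π₂ s0 a * ∑ s1, p s0 a s1 := by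
          simp only [hMapp, Finset.mul_sum]; exact Finset.sum_comm
      _ = ∑ a, π₂ s0 a := by
          refine Finset.sum_congr rfl fun a _ => ?_
          rw [(hp s0 a).2, mul_one]
      _ = 1 := (hπ₂ s0).2
  have hMpnn : ∀ t : ℕ, ∀ s0 s1, 0 ≤ (M ^ t) s0 s1 := by
    intro t
    induction t with
    | zero =>
      intro s0 s1
      simp only [pow_zero, Matrix.one_apply]
      split <;> norm_num
    | succ n ih =>
      intro s0 s1
      rw [pow_succ, Matrix.mul_apply]
      exact Finset.sum_nonneg fun u _ => mul_nonneg (ih s0 u) (hMnn u s1)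
  have hMprow : ∀ t : ℕ, ∀ s0, ∑ s1, (M ^ t) s0 s1 = 1 := by
    intro t
    induction t with
    | zero => intro s0; simp [Matrix.one_apply]
    | succ n ih =>
      intro s0
      calc ∑ s1, (M ^ (n+1)) s0 s1 = ∑ s1, ∑ u, (M ^ n) s0 u * M u s1 := by
            simp only [pow_succ, Matrix.mul_apply]
        _ = ∑ u, (M ^ n) s0 u * ∑ s1, M u s1 := by
            rw [Finset.sum_comm]; simp only [Finset.mul_sum]
        _ = 1 := by simp only [hMrow, mul_one]; exact ih s0
  have hMple : ∀ t : ℕ, ∀ s0 s1, (M ^ t) s0 s1 ≤ 1 := by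
    intro t s0 s1
    calc (M ^ t) s0 s1 ≤ ∑ u, (M ^ t) s0 u :=
          Finset.single_le_sum (fun u _ => hMpnn t s0 u) (Finset.mem_univ s1)
      _ = 1 := hMprow t s0
  have habs : ∀ (v : S → ℝ) (t : ℕ) (s0 : S), |((M ^ t).mulVec v) s0| ≤ ‖v‖ := by
    intro v t s0
    have h0 : ((M ^ t).mulVec v) s0 = ∑ s1, (M ^ t) s0 s1 * v s1 := rfl
    rw [h0]
    calc |∑ s1, (M ^ t) s0 s1 * v s1| ≤ ∑ s1, |(M ^ t) s0 s1 * v s1| :=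
          Finset.abs_sum_le_sum_abs _ _
      _ ≤ ∑ s1, (M ^ t) s0 s1 * ‖v‖ := by
          refine Finset.sum_le_sum fun s1 _ => ?_
          rw [abs_mul, abs_of_nonneg (hMpnn t s0 s1)]
          refine mul_le_mul_of_nonneg_left ?_ (hMpnn t s0 s1)
          simpa [Real.norm_eq_abs] using norm_le_pi_norm v s1
      _ = ‖v‖ := by rw [← Finset.sum_mul, hMprow, one_mul]
  -- fixed point relation
  have hfix : ∀ s0, W s0 = g s0 + β * (M.mulVec W) s0 := by
    intro s0
    have hQsum1 : V₁ s0 = ∑ a, π₁ s0 a * Q₁ s0 a := by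
      rw [hV₁ s0]; exact Finset.sum_congr rfl fun a _ => by rw [hQ₁]
    have hmv : (M.mulVec W) s0 = ∑ a, π₂ s0 a * ∑ s1, p s0 a s1 * W s1 := by
      calc (M.mulVec W) s0 = ∑ s1, ∑ a, π₂ s0 a * p s0 a s1 * W s1 := by
            simp only [Matrix.mulVec, dotProduct, hMapp, Finset.sum_mul]
        _ = ∑ a, ∑ s1, π₂ s0 a * p s0 a s1 * W s1 := Finset.sum_comm
        _ = ∑ a, π₂ s0 a * ∑ s1, p s0 a s1 * W s1 := by
            refine Finset.sum_congr rfl fun a _ => ?_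
            rw [Finset.mul_sum]
            exact Finset.sum_congr rfl fun s1 _ => by ring
    have key : ∀ a, π₁ s0 a * Q₁ s0 a
        - π₂ s0 a * (c s0 a + γ * (1 - R) * ∑ s1, p s0 a s1 * V₂ s1 + γ * R * lse σ V₂)
        = (π₁ s0 a - π₂ s0 a) * Q₁ s0 a
          + π₂ s0 a * (β * ∑ s1, p s0 a s1 * W s1) + π₂ s0 a * k := by
      intro a
      have hsub : ∑ s1, p s0 a s1 * W s1
          = ∑ s1, p s0 a s1 * V₁ s1 - ∑ s1, p s0 a s1 * V₂ s1 := by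
        rw [← Finset.sum_sub_distrib]
        refine Finset.sum_congr rfl fun s1 _ => ?_
        simp only [hWdef]; ring
      rw [hQ₁, hsub]
      simp only [hkdef, hβdef]
      ring
    calc W s0 = ∑ a, (π₁ s0 a * Q₁ s0 a
          - π₂ s0 a * (c s0 a + γ * (1 - R) * ∑ s1, p s0 a s1 * V₂ s1 + γ * R * lse σ V₂)) := by
          show V₁ s0 - V₂ s0 = _
          rw [hQsum1, hV₂ s0, ← Finset.sum_sub_distrib]
      _ = ∑ a, ((π₁ s0 a - π₂ s0 a) * Q₁ s0 a
            + π₂ s0 a * (β * ∑ s1, p s0 a s1 * W s1) + π₂ s0 a * k) :=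
          Finset.sum_congr rfl fun a _ => key a
      _ = Δ s0 + β * ∑ a, π₂ s0 a * ∑ s1, p s0 a s1 * W s1 + k * ∑ a, π₂ s0 a := by
          rw [Finset.sum_add_distrib, Finset.sum_add_distrib, Finset.mul_sum, Finset.mul_sum]
          congr 1
          · congr 1
            exact Finset.sum_congr rfl fun a _ => by ring
          · exact Finset.sum_congr rfl fun a _ => by ring
      _ = g s0 + β * (M.mulVec W) s0 := by
          rw [(hπ₂ s0).2, mul_one, hmv]
          simp only [hgdef]
          ring
  have hWfun : W = g + β • M.mulVec W := by
    funext s0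
    rw [hfix s0]
    simp [smul_eq_mul]
  -- partial sum identity
  have hiter : ∀ n : ℕ, ∀ s0 : S, ∑ t ∈ Finset.range n, β ^ t * ((M ^ t).mulVec g) s0
      = W s0 - β ^ n * ((M ^ n).mulVec W) s0 := by
    intro n
    induction n with
    | zero => intro s0; simp [Matrix.one_mulVec]
    | succ n ih =>
      intro s0
      rw [Finset.sum_range_succ, ih s0]
      have step : ((M ^ n).mulVec W) s0
          = ((M ^ n).mulVec g) s0 + β * ((M ^ (n+1)).mulVec W) s0 := by
        have h1 : (M ^ (n+1)).mulVec W = (M ^ n).mulVec (M.mulVec W) := by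
          rw [Matrix.mulVec_mulVec, ← pow_succ]
        have h2 : (M ^ n).mulVec W
            = (M ^ n).mulVec g + β • (M ^ n).mulVec (M.mulVec W) := by
          calc (M ^ n).mulVec W = (M ^ n).mulVec (g + β • M.mulVec W) := by rw [← hWfun]
            _ = (M ^ n).mulVec g + β • (M ^ n).mulVec (M.mulVec W) := by
                rw [Matrix.mulVec_add, Matrix.mulVec_smul]
        rw [h1]
        have := congrFun h2 s0
        simpa [smul_eq_mul] using this
      rw [step]
      ring
  -- summability
  have hsumv : ∀ v : S → ℝ, Summable (fun t : ℕ => β ^ t * ((M ^ t).mulVec v) s) := by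
    intro v
    refine Summable.of_norm_bounded
      ((summable_geometric_of_lt_one hβ0 hβ1).mul_right ‖v‖) fun t => ?_
    rw [Real.norm_eq_abs, abs_mul, abs_of_nonneg (pow_nonneg hβ0 t)]
    exact mul_le_mul_of_nonneg_left (habs v t s) (pow_nonneg hβ0 t)
  -- limit: W s = tsum
  have hWs : W s = ∑' t : ℕ, β ^ t * ((M ^ t).mulVec g) s := by
    have h0 : Filter.Tendsto (fun n : ℕ => β ^ n * ((M ^ n).mulVec W) s)
        Filter.atTop (nhds 0) := by
      refine squeeze_zero_norm (fun n => ?_)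
        (by simpa using (tendsto_pow_atTop_nhds_zero_of_lt_one hβ0 hβ1).mul_const ‖W‖)
      rw [Real.norm_eq_abs, abs_mul, abs_of_nonneg (pow_nonneg hβ0 n)]
      exact mul_le_mul_of_nonneg_left (habs W n s) (pow_nonneg hβ0 n)
    have hlim : Filter.Tendsto (fun n : ℕ => ∑ t ∈ Finset.range n, β ^ t * ((M ^ t).mulVec g) s)
        Filter.atTop (nhds (W s)) := by
      have := Filter.Tendsto.sub (tendsto_const_nhds (x := W s) (f := Filter.atTop) ) h0
      rw [sub_zero] at this
      exact this.congr fun n => (hiter n s).symm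
    exact tendsto_nhds_unique hlim (hsumv g).hasSum.tendsto_sum_nat
  -- split g into Δ and constant
  have hsplit : ∀ t : ℕ, β ^ t * ((M ^ t).mulVec g) s
      = β ^ t * ((M ^ t).mulVec Δ) s + k * β ^ t := by
    intro t
    have h1 : ((M ^ t).mulVec g) s = ((M ^ t).mulVec Δ) s + k := by
      have e1 : ((M ^ t).mulVec g) s = ∑ s1, (M ^ t) s s1 * (Δ s1 + k) := rfl
      have e2 : ((M ^ t).mulVec Δ) s = ∑ s1, (M ^ t) s s1 * Δ s1 := rfl
      rw [e1, e2]
      simp only [mul_add, Finset.sum_add_distrib]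
      rw [← Finset.sum_mul, hMprow, one_mul]
    rw [h1]; ring
  have hWdec : W s = (∑' t : ℕ, β ^ t * ((M ^ t).mulVec Δ) s) + k * (1 - β)⁻¹ := by
    rw [hWs, tsum_congr hsplit,
      Summable.tsum_add (hsumv Δ) ((summable_geometric_of_lt_one hβ0 hβ1).mul_left k),
      tsum_mul_left, tsum_geometric_of_lt_one hβ0 hβ1]
  -- dvisit side
  have hdv : ∀ s1, dvisit γ R π₂ p s s1 = (1 - β) * ∑' t : ℕ, β ^ t * (M ^ t) s s1 := by
    intro s1
    show (1 - γ + γ * R) * ∑' t : ℕ, (γ * (1 - R)) ^ t * ((pmat π₂ p) ^ t) s s1 = _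
    rw [← hβdef, ← hMdef]
    congr 1
    ring
  have hts : ∀ s1, Summable (fun t : ℕ => β ^ t * (M ^ t) s s1 * Δ s1) := by
    intro s1
    refine Summable.of_norm_bounded
      ((summable_geometric_of_lt_one hβ0 hβ1).mul_right |Δ s1|) fun t => ?_
    rw [Real.norm_eq_abs, abs_mul, abs_mul, abs_of_nonneg (pow_nonneg hβ0 t),
      abs_of_nonneg (hMpnn t s s1)]
    have h2 := hMple t s s1
    show β ^ t * (M ^ t) s s1 * |Δ s1| ≤ β ^ t * |Δ s1|
    have h3 : β ^ t * (M ^ t) s s1 ≤ β ^ t :=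
      (mul_le_mul_of_nonneg_left h2 (pow_nonneg hβ0 t)).trans_eq (mul_one _)
    exact mul_le_mul_of_nonneg_right h3 (abs_nonneg _)
  have hRHSsum : ∑ s1, dvisit γ R π₂ p s s1 * Δ s1
      = (1 - β) * ∑' t : ℕ, β ^ t * ((M ^ t).mulVec Δ) s := by
    calc ∑ s1, dvisit γ R π₂ p s s1 * Δ s1
        = ∑ s1, (1 - β) * ∑' t : ℕ, β ^ t * (M ^ t) s s1 * Δ s1 := by
          refine Finset.sum_congr rfl fun s1 _ => ?_
          rw [hdv s1, mul_assoc, ← tsum_mul_right]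
      _ = (1 - β) * ∑ s1, ∑' t : ℕ, β ^ t * (M ^ t) s s1 * Δ s1 := by
          rw [Finset.mul_sum]
      _ = (1 - β) * ∑' t : ℕ, ∑ s1, β ^ t * (M ^ t) s s1 * Δ s1 := by
          rw [Summable.tsum_finsetSum fun s1 _ => hts s1]
      _ = (1 - β) * ∑' t : ℕ, β ^ t * ((M ^ t).mulVec Δ) s := by
          congr 1
          refine tsum_congr fun t => ?_
          have e2 : ((M ^ t).mulVec Δ) s = ∑ s1, (M ^ t) s s1 * Δ s1 := rfl
          rw [e2, Finset.mul_sum]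
          exact Finset.sum_congr rfl fun s1 _ => by ring
  -- conclude
  have hΔapp : ∀ s1 : S, (∑ a, (π₁ s1 a - π₂ s1 a) * Q₁ s1 a) = Δ s1 := fun s1 => rfl
  have hden : 1 - γ + γ * R = 1 - β := by rw [hβdef]; ring
  have hWss : V₁ s - V₂ s = W s := rfl
  rw [hWss]
  simp only [hΔapp]
  rw [hden, hRHSsum, hWdec]
  have hkk : γ * R / (1 - β) * (lse σ V₁ - lse σ V₂) = k * (1 - β)⁻¹ := by
    rw [hkdef]; field_simp
  rw [hkk]
  have : 1 / (1 - β) * ((1 - β) * ∑' t : ℕ, β ^ t * ((M ^ t).mulVec Δ) s)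
      = ∑' t : ℕ, β ^ t * ((M ^ t).mulVec Δ) s := by
    field_simp
  rw [this]
end
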